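/- The prism B = {x ∈ ℝ^n : x_1 ≥ x_2 ≥ ⋯ ≥ x_n ≥ x_1 - √(1+w), 0 ≤ Σ_i x_i ≤ √(1-w(n-1))} has volume (1+w)^{(n-1)/2}(1-w(n-1))^{1/2}/n!, equal to the volume of Q_n(w). -/

import Mathlib

open MeasureTheory

def corner (n : ℕ) (c : ℝ) : Set (Fin n → ℝ) :=
  {y | (∀ i, 0 ≤ y i) ∧ ∑ i, y i ≤ c}

lemma isClosed_corner (n : ℕ) (c : ℝ) : IsClosed (corner n c) := by
  have h1 : IsClosed {y : Fin n → ℝ | ∀ i, 0 ≤ y i} := by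
    have : {y : Fin n → ℝ | ∀ i, 0 ≤ y i} = ⋂ i, {y | 0 ≤ y i} := by ext y; simp
    rw [this]
    exact isClosed_iInter fun i => isClosed_le continuous_const (continuous_apply i)
  have h2 : IsClosed {y : Fin n → ℝ | ∑ i, y i ≤ c} :=
    isClosed_le (by continuity) continuous_const
  exact h1.inter h2

lemma convex_corner (n : ℕ) (c : ℝ) : Convex ℝ (corner n c) := by
  intro x hx y hy p q hp hq hpq
  constructor
  · intro i
    have := hx.1 i; have := hy.1 i
    simp only [Pi.add_apply, Pi.smul_apply, smul_eq_mul]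
    nlinarith
  · simp only [Pi.add_apply, Pi.smul_apply, smul_eq_mul, Finset.sum_add_distrib, ← Finset.mul_sum]
    have h1 := mul_le_mul_of_nonneg_left hx.2 hp
    have h2 := mul_le_mul_of_nonneg_left hy.2 hq
    have hc' : p * c + q * c = c := by rw [← add_mul, hpq, one_mul]
    linarith

lemma volume_corner : ∀ (n : ℕ) (c : ℝ), 0 ≤ c →
    volume (corner n c) = ENNReal.ofReal (c ^ n / n.factorial) := by
  intro n
  induction n with
  | zero =>
    intro c hc
    have : corner 0 c = Set.univ := by
      ext y; simp [corner, hc]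
    rw [this]
    simp only [pow_zero, Nat.factorial_zero, Nat.cast_one, div_one, ENNReal.ofReal_one]
    rw [MeasureTheory.volume_pi, Measure.pi_univ]
    simp
  | succ n ih =>
    intro c hc
    have hA : {p : ℝ × (Fin n → ℝ) | 0 ≤ p.1 ∧ p.1 ≤ c ∧ (∀ i, 0 ≤ p.2 i) ∧ p.1 + ∑ i, p.2 i ≤ c}
        = ({p : ℝ × (Fin n → ℝ) | 0 ≤ p.1} ∩ {p | p.1 ≤ c} ∩ (⋂ i, {p | 0 ≤ p.2 i})
            ∩ {p | p.1 + ∑ i, p.2 i ≤ c}) := by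
      ext p
      simp only [Set.mem_setOf_eq, Set.mem_inter_iff, Set.mem_iInter]
      tauto
    have hAc : IsClosed {p : ℝ × (Fin n → ℝ) |
        0 ≤ p.1 ∧ p.1 ≤ c ∧ (∀ i, 0 ≤ p.2 i) ∧ p.1 + ∑ i, p.2 i ≤ c} := by
      rw [hA]
      refine IsClosed.inter (IsClosed.inter (IsClosed.inter ?_ ?_) ?_) ?_
      · exact isClosed_le continuous_const continuous_fst
      · exact isClosed_le continuous_fst continuous_const
      · exact isClosed_iInter fun i =>
          isClosed_le continuous_const ((continuous_apply i).comp continuous_snd)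
      · exact isClosed_le (continuous_fst.add
          (continuous_finset_sum _ fun i _ => (continuous_apply i).comp continuous_snd))
          continuous_const
    have hAm := hAc.measurableSet
    have he : ∀ x : Fin (n+1) → ℝ,
        (MeasurableEquiv.piFinSuccAbove (fun _ : Fin (n+1) => ℝ) 0) x
          = (x 0, fun j : Fin n => x j.succ) := by
      intro x
      simp [MeasurableEquiv.piFinSuccAbove_apply, Fin.removeNth, Fin.zero_succAbove]
      rfl
    have hpre : corner (n+1) c =
        (MeasurableEquiv.piFinSuccAbove (fun _ : Fin (n+1) => ℝ) 0) ⁻¹'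
          {p : ℝ × (Fin n → ℝ) | 0 ≤ p.1 ∧ p.1 ≤ c ∧ (∀ i, 0 ≤ p.2 i) ∧ p.1 + ∑ i, p.2 i ≤ c} := by
      ext x
      simp only [corner, Set.mem_setOf_eq, Set.mem_preimage, he, Fin.forall_fin_succ,
        Fin.sum_univ_succ]
      constructor
      · rintro ⟨⟨h0, hs⟩, hsum⟩
        have hnn : 0 ≤ ∑ i : Fin n, x (Fin.succ i) :=
          Finset.sum_nonneg fun i _ => hs i
        exact ⟨h0, by linarith, hs, hsum⟩
      · rintro ⟨h0, _, hs, hsum⟩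
        exact ⟨⟨h0, hs⟩, hsum⟩
    rw [hpre,
      (volume_preserving_piFinSuccAbove (fun _ : Fin (n+1) => ℝ) 0).measure_preimage_emb
        (MeasurableEquiv.measurableEmbedding _)]
    rw [Measure.volume_eq_prod, Measure.prod_apply hAm]
    have hslice : ∀ x : ℝ, (volume : Measure (Fin n → ℝ)) (Prod.mk x ⁻¹'
          {p : ℝ × (Fin n → ℝ) | 0 ≤ p.1 ∧ p.1 ≤ c ∧ (∀ i, 0 ≤ p.2 i) ∧ p.1 + ∑ i, p.2 i ≤ c}) =
        Set.indicator (Set.Icc 0 c) (fun x => ENNReal.ofReal ((c - x) ^ n / n.factorial)) x := by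
      intro x
      by_cases hx : x ∈ Set.Icc 0 c
      · have hset : Prod.mk x ⁻¹'
            {p : ℝ × (Fin n → ℝ) | 0 ≤ p.1 ∧ p.1 ≤ c ∧ (∀ i, 0 ≤ p.2 i) ∧ p.1 + ∑ i, p.2 i ≤ c}
            = corner n (c - x) := by
          ext y
          simp only [Set.mem_preimage, Set.mem_setOf_eq, corner]
          constructor
          · rintro ⟨_, _, h1, h2⟩; exact ⟨h1, by linarith⟩
          · rintro ⟨h1, h2⟩; exact ⟨hx.1, hx.2, h1, by linarith⟩
        rw [hset, ih (c - x) (by linarith [hx.2]), Set.indicator_of_mem hx]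
      · have hset : Prod.mk x ⁻¹'
            {p : ℝ × (Fin n → ℝ) | 0 ≤ p.1 ∧ p.1 ≤ c ∧ (∀ i, 0 ≤ p.2 i) ∧ p.1 + ∑ i, p.2 i ≤ c}
            = ∅ := by
          ext y
          simp only [Set.mem_preimage, Set.mem_setOf_eq, Set.mem_empty_iff_false, iff_false]
          rintro ⟨h1, h2, _⟩
          exact hx ⟨h1, h2⟩
        rw [hset, Set.indicator_of_notMem hx]
        simp
    simp only [hslice]
    rw [lintegral_indicator measurableSet_Icc]
    rw [← ofReal_integral_eq_lintegral_ofReal]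
    · rw [MeasureTheory.integral_Icc_eq_integral_Ioc, ← intervalIntegral.integral_of_le hc]
      have hdiv : ∫ x in (0:ℝ)..c, (c - x) ^ n / n.factorial
          = (∫ x in (0:ℝ)..c, (c - x) ^ n) / n.factorial := by
        rw [intervalIntegral.integral_div]
      rw [hdiv, intervalIntegral.integral_comp_sub_left (fun x => x ^ n) c]
      simp only [sub_self, sub_zero, integral_pow, zero_pow (Nat.succ_ne_zero n)]
      rw [ENNReal.ofReal_eq_ofReal_iff]
      · rw [Nat.factorial_succ]
        push_cast
        field_simp
        try ring
      · positivity
      · positivity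
    · apply Continuous.integrableOn_Icc
      continuity
    · filter_upwards [ae_restrict_mem measurableSet_Icc] with x hx
      have : 0 ≤ c - x := by linarith [hx.2]
      positivity

lemma hull_eq_corner (n : ℕ) :
    convexHull ℝ (insert (0 : Fin n → ℝ) (Set.range fun i : Fin n => (Pi.single i 1 : Fin n → ℝ)))
      = corner n 1 := by
  apply subset_antisymm
  · apply convexHull_min
    · intro z hz
      rcases hz with rfl | ⟨i, rfl⟩
      · exact ⟨fun i => le_refl 0, by simp⟩
      · constructor
        · intro j
          rcases eq_or_ne i j with rfl | h
          · simp [Pi.single_apply]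
          · simp [Pi.single_apply, h]
        · simp [Pi.single_apply]
    · exact convex_corner n 1
  · intro y hy
    have hsum : ∑ o : Option (Fin n),
        (fun o : Option (Fin n) => o.elim (1 - ∑ i, y i) y) o = 1 := by
      rw [Fintype.sum_option]
      simp
    have key : (Finset.univ : Finset (Option (Fin n))).centerMass
        (fun o : Option (Fin n) => o.elim (1 - ∑ i, y i) y)
        (fun o : Option (Fin n) => o.elim (0 : Fin n → ℝ) (fun i => Pi.single i 1)) = y := by
      rw [Finset.centerMass, hsum]
      rw [Fintype.sum_option]
      simp only [Option.elim, smul_zero, zero_add, inv_one, one_smul]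
      have : ∀ i : Fin n, y i • (Pi.single i 1 : Fin n → ℝ) = Pi.single i (y i) := by
        intro i
        rw [← Pi.single_smul]
        simp
      simp_rw [this]
      exact Finset.univ_sum_single y
    rw [← key]
    apply Finset.centerMass_mem_convexHull
    · rintro (_ | i) _
      · simpa using hy.2
      · exact hy.1 i
    · rw [hsum]; norm_num
    · rintro (_ | i) _
      · exact Set.mem_insert _ _
      · exact Set.mem_insert_of_mem _ ⟨i, rfl⟩


lemma volume_transfer (n : ℕ) (A : Set (EuclideanSpace ℝ (Fin n))) :
    volume A = (volume : Measure (Fin n → ℝ)) (WithLp.toLp 2 ⁻¹' A) := by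
  have h := (EuclideanSpace.volume_preserving_symm_measurableEquiv_toLp (Fin n)).symm.measure_preimage_emb
    (MeasurableEquiv.measurableEmbedding _) A
  have he : ((MeasurableEquiv.toLp 2 (Fin n → ℝ)).symm.symm) ⁻¹' A = WithLp.toLp 2 ⁻¹' A := rfl
  rw [he] at h
  exact h.symm

lemma hull_transfer (n : ℕ) (s : Set (Fin n → ℝ)) :
    WithLp.toLp 2 ⁻¹' convexHull ℝ (WithLp.toLp 2 '' s : Set (EuclideanSpace ℝ (Fin n)))
      = convexHull ℝ s := by
  have h := LinearMap.image_convexHull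
    ((WithLp.linearEquiv 2 ℝ (Fin n → ℝ)).symm.toLinearMap) s
  have he : ∀ X : Set (Fin n → ℝ),
      (WithLp.linearEquiv 2 ℝ (Fin n → ℝ)).symm.toLinearMap '' X = WithLp.toLp 2 '' X :=
    fun X => rfl
  rw [he, he] at h
  rw [← h, Set.preimage_image_eq _ (WithLp.toLp_injective 2)]

lemma volume_Q (m : ℕ) (a b s t : ℝ) (hs : 0 < s) (ht : 0 ≤ t)
    (ha : a = b + s) (hnb : ((m:ℝ)+1) * b = t - s)
    (v : Fin (m+1) → Fin (m+1) → ℝ) (hv : ∀ i j, v i j = if i = j then a else b) :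
    (volume : Measure (Fin (m+1) → ℝ))
      (convexHull ℝ (insert (0 : Fin (m+1) → ℝ)
        (Set.range (fun i : Fin (m+1) => (fun j => ∑ k ∈ Finset.Iic i, v k j : Fin (m+1) → ℝ))))) =
      ENNReal.ofReal (s ^ m * t / (m+1).factorial) := by
  set V : Matrix (Fin (m+1)) (Fin (m+1)) ℝ := Matrix.of v with hV
  set W : Matrix (Fin (m+1)) (Fin (m+1)) ℝ :=
    Matrix.of (fun k i : Fin (m+1) => if k ≤ i then (1:ℝ) else 0) with hW
  have hdetW : W.det = 1 := by
    rw [Matrix.det_of_upperTriangular]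
    · simp [hW, Matrix.of_apply]
    · intro i j hij
      simp only [id_eq] at hij
      simp only [hW, Matrix.of_apply]
      exact if_neg (not_le.2 hij)
  have hVeq : V = s • (1 + Matrix.replicateCol Unit (fun _ => b/s) * Matrix.replicateRow Unit (fun _ => (1:ℝ))) := by
    ext i j
    simp only [hV, Matrix.of_apply, Matrix.smul_apply, Matrix.add_apply, Matrix.one_apply,
      Matrix.mul_apply, Matrix.replicateCol_apply, Matrix.replicateRow_apply, Finset.univ_unique,
      Finset.sum_singleton, smul_eq_mul, hv]
    rcases eq_or_ne i j with rfl | h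
    · rw [if_pos rfl, if_pos rfl, ha]
      field_simp
      ring
    · rw [if_neg h, if_neg h]
      field_simp
      ring
  have hdetV : V.det = s ^ m * t := by
    rw [hVeq, Matrix.det_smul, Matrix.det_one_add_replicateCol_mul_replicateRow]
    simp only [dotProduct, Fintype.card_fin, one_mul, Finset.sum_const,
      Finset.card_univ, nsmul_eq_mul]
    push_cast
    have hs' : s ≠ 0 := ne_of_gt hs
    have key : s * (1 + ((m:ℝ)+1) * (b/s)) = t := by
      rw [mul_add, mul_one,
        show s * (((m:ℝ)+1) * (b/s)) = ((m:ℝ)+1) * b * (s / s) by ring, div_self hs',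
        mul_one, hnb]
      ring
    calc s^(m+1) * (1 + ((m:ℝ)+1)*(b/s))
        = s^m * (s * (1 + ((m:ℝ)+1)*(b/s))) := by rw [pow_succ]; ring
      _ = s^m * t := by rw [key]
  set Lmat := Matrix.transpose V * W with hL
  have hdetL : Lmat.det = s ^ m * t := by
    rw [hL, Matrix.det_mul, Matrix.det_transpose, hdetV, hdetW, mul_one]
  have himg : ⇑(Matrix.toLin' Lmat) '' corner (m+1) 1 =
      convexHull ℝ (insert (0 : Fin (m+1) → ℝ)
        (Set.range (fun i : Fin (m+1) => (fun j => ∑ k ∈ Finset.Iic i, v k j : Fin (m+1) → ℝ)))) := by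
    rw [← hull_eq_corner, LinearMap.image_convexHull]
    congr 1
    rw [Set.image_insert_eq, map_zero, ← Set.range_comp]
    have hfun : (⇑(Matrix.toLin' Lmat) ∘ fun i : Fin (m+1) => (Pi.single i 1 : Fin (m+1) → ℝ))
        = fun (i : Fin (m+1)) (j : Fin (m+1)) => ∑ k ∈ Finset.Iic i, v k j := by
      funext i j
      simp only [Function.comp_apply, Matrix.toLin'_apply, Matrix.mulVec_single_one, Matrix.col_apply]
      simp only [mul_one, hL, Matrix.mul_apply, Matrix.transpose_apply, hV, hW, Matrix.of_apply]
      rw [show (∑ k ∈ Finset.Iic i, v k j)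
            = ∑ x : Fin (m+1), if x ∈ Finset.Iic i then v x j else 0 by
          rw [Finset.sum_ite_mem, Finset.univ_inter]]
      refine Finset.sum_congr rfl fun k _ => ?_
      by_cases h : k ≤ i
      · simp [h, Finset.mem_Iic]
      · simp [h, Finset.mem_Iic]
    rw [hfun]
  rw [← himg, Measure.addHaar_image_linearMap, LinearMap.det_toLin', hdetL,
    volume_corner (m+1) 1 zero_le_one, ← ENNReal.ofReal_mul (abs_nonneg _),
    abs_of_nonneg (by positivity)]
  congr 1
  simp [one_pow]
  ring

lemma telesum (m : ℕ) (x : Fin (m+1) → ℝ) :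
    ∑ k : Fin m, (x k.castSucc - x k.succ) = x 0 - x (Fin.last m) := by
  have key := Finset.sum_range_sub' (fun i => x ⟨min i m, by omega⟩) m
  rw [← Fin.sum_univ_eq_sum_range
    (fun i => x ⟨min i m, by omega⟩ - x ⟨min (i+1) m, by omega⟩) m] at key
  have h3 : (⟨min 0 m, by omega⟩ : Fin (m+1)) = 0 := Fin.ext (by simp)
  have h4 : (⟨min m m, by omega⟩ : Fin (m+1)) = Fin.last m := Fin.ext (by simp)
  rw [h3, h4] at key
  rw [← key]
  refine Finset.sum_congr rfl fun k _ => ?_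
  have h1 : (⟨min (↑k) m, by omega⟩ : Fin (m+1)) = k.castSucc :=
    Fin.ext (by simp only [Fin.coe_castSucc]; omega)
  have h2 : (⟨min ((k:ℕ)+1) m, by omega⟩ : Fin (m+1)) = k.succ :=
    Fin.ext (by simp only [Fin.val_succ]; omega)
  rw [h1, h2]

lemma volume_B (m : ℕ) (s t : ℝ) (hs : 0 ≤ s) (ht : 0 ≤ t)
    (B : Set (Fin (m+1) → ℝ))
    (hB : B = {x : Fin (m+1) → ℝ |
      (∀ i j : Fin (m+1), i ≤ j → x j ≤ x i) ∧
      x 0 - s ≤ x (Fin.last m) ∧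
      0 ≤ ∑ i, x i ∧ (∑ i, x i) ≤ t}) :
    volume B = ENNReal.ofReal (s ^ m * t / (m+1).factorial) := by
  classical
  set D : Matrix (Fin (m+1)) (Fin (m+1)) ℝ :=
    Matrix.of (fun i j : Fin (m+1) =>
      if j = i then (1:ℝ) else if (j:ℕ) = (i:ℕ)+1 then -1 else 0) with hD
  set S : Matrix (Fin (m+1)) (Fin (m+1)) ℝ :=
    Matrix.of (fun i j : Fin (m+1) =>
      if i = Fin.last m then ((j:ℕ)+1 : ℝ) else if j = i then 1 else 0) with hSm
  set N : Matrix (Fin (m+1)) (Fin (m+1)) ℝ := S * D with hN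
  have hdetD : D.det = 1 := by
    rw [Matrix.det_of_upperTriangular]
    · simp [hD]
    · intro i j hij
      simp only [id_eq] at hij
      have hvlt : (j:ℕ) < (i:ℕ) := hij
      simp only [hD, Matrix.of_apply]
      rw [if_neg (Fin.ne_of_lt hij), if_neg (by omega)]
  have hdetS : S.det = (m:ℝ)+1 := by
    rw [Matrix.det_of_lowerTriangular]
    · have hdiag : ∀ i : Fin (m+1), S i i = if i = Fin.last m then ((m:ℝ)+1) else 1 := by
        intro i
        by_cases h : i = Fin.last m
        · subst h; simp [hSm]
        · simp [hSm, h]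
      rw [Finset.prod_congr rfl fun i _ => hdiag i,
        Finset.prod_ite_eq' Finset.univ (Fin.last m) (fun _ => ((m:ℝ)+1))]
      simp
    · intro i j hij
      have hlt : i < j := hij
      have hil : i ≠ Fin.last m := by
        intro h; subst h
        exact absurd hlt (not_lt.2 (Fin.le_last _))
      simp only [hSm, Matrix.of_apply]
      rw [if_neg hil, if_neg (ne_of_gt hlt)]
  have hdetN : N.det = (m:ℝ)+1 := by
    rw [hN, Matrix.det_mul, hdetD, hdetS, mul_one]
  -- rows of N
  have hNrow : ∀ (i : Fin (m+1)), i ≠ Fin.last m → ∀ j, N i j = D i j := by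
    intro i hi j
    rw [hN]
    simp only [Matrix.mul_apply, hSm, Matrix.of_apply, if_neg hi]
    rw [Finset.sum_congr rfl (fun k _ => by rw [ite_mul, one_mul, zero_mul] :
      ∀ k ∈ Finset.univ, (if k = i then (1:ℝ) else 0) * D k j = if k = i then D k j else 0)]
    rw [Finset.sum_ite_eq' Finset.univ i (fun k => D k j), if_pos (Finset.mem_univ i)]
  have hNlast : ∀ j, N (Fin.last m) j = 1 := by
    intro j
    rw [hN]
    simp only [Matrix.mul_apply, hSm, Matrix.of_apply, if_pos rfl, if_true]
    have split : ∀ k : Fin (m+1), (((k:ℕ)+1 : ℝ)) * D k j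
        = (if k = j then (((j:ℕ):ℝ)+1) else 0)
          + (if (j:ℕ) = (k:ℕ)+1 then -((j:ℕ):ℝ) else 0) := by
      intro k
      simp only [hD, Matrix.of_apply]
      rcases eq_or_ne k j with rfl | hkj
      · rw [if_pos rfl, if_pos rfl, if_neg (by omega), mul_one, add_zero]
      · rw [if_neg (Ne.symm hkj), if_neg hkj]
        by_cases h2 : (j:ℕ) = (k:ℕ)+1
        · rw [if_pos h2, if_pos h2, mul_neg_one, zero_add, h2]
          push_cast
          ring
        · rw [if_neg h2, if_neg h2, mul_zero, add_zero]
    rw [Finset.sum_congr rfl fun k _ => split k, Finset.sum_add_distrib,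
      Finset.sum_ite_eq' Finset.univ j (fun _ => (((j:ℕ):ℝ)+1)), if_pos (Finset.mem_univ _)]
    have hsecond : (∑ k : Fin (m+1), if (j:ℕ) = (k:ℕ)+1 then -((j:ℕ):ℝ) else 0)
        = -((j:ℕ):ℝ) := by
      rcases Nat.eq_zero_or_pos (j:ℕ) with hj | hj
      · rw [Finset.sum_eq_zero fun k _ => by rw [if_neg (by omega)]]
        rw [hj]; simp
      · set k0 : Fin (m+1) := ⟨(j:ℕ)-1, by omega⟩ with hk0
        have hcond : ∀ k : Fin (m+1), ((j:ℕ) = (k:ℕ)+1) ↔ k = k0 := by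
          intro k
          rw [Fin.ext_iff, hk0]
          simp only []
          omega
        simp only [hcond]
        rw [Finset.sum_ite_eq' Finset.univ k0 (fun _ => -((j:ℕ):ℝ)),
          if_pos (Finset.mem_univ _)]
    rw [hsecond]
    ring
  -- action of N on vectors
  have hT_last : ∀ x : Fin (m+1) → ℝ, Matrix.toLin' N x (Fin.last m) = ∑ j, x j := by
    intro x
    simp only [Matrix.toLin'_apply, Matrix.mulVec, dotProduct]
    exact Finset.sum_congr rfl fun j _ => by simp only [hNlast j, one_mul]
  have hT_cast : ∀ (x : Fin (m+1) → ℝ) (k : Fin m),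
      Matrix.toLin' N x k.castSucc = x k.castSucc - x k.succ := by
    intro x k
    simp only [Matrix.toLin'_apply, Matrix.mulVec, dotProduct]
    have hne : Fin.castSucc k ≠ Fin.last m := ne_of_lt (Fin.castSucc_lt_last k)
    have split : ∀ j : Fin (m+1), N k.castSucc j * x j
        = (if j = k.castSucc then x j else 0) + (if j = k.succ then -(x j) else 0) := by
      intro j
      rw [hNrow _ hne j]
      simp only [hD, Matrix.of_apply]
      rcases eq_or_ne j k.castSucc with rfl | hj1
      · rw [if_pos rfl, if_pos rfl, one_mul,
          if_neg (by rw [Fin.ext_iff]; simp only [Fin.coe_castSucc, Fin.val_succ]; omega),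
          add_zero]
      · rw [if_neg hj1, if_neg hj1]
        by_cases hj2 : j = k.succ
        · rw [if_pos hj2, if_pos (by subst hj2; simp only [Fin.val_succ, Fin.coe_castSucc]),
            neg_one_mul, zero_add]
        · rw [if_neg hj2, if_neg (by
            intro hc
            apply hj2
            rw [Fin.ext_iff]
            simp only [Fin.val_succ, Fin.coe_castSucc] at hc ⊢
            omega), zero_mul, add_zero]
    rw [Finset.sum_congr rfl fun j _ => split j, Finset.sum_add_distrib,
      Finset.sum_ite_eq' Finset.univ k.castSucc (fun j => x j), if_pos (Finset.mem_univ _),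
      Finset.sum_ite_eq' Finset.univ k.succ (fun j => -(x j)), if_pos (Finset.mem_univ _)]
    ring
  -- the preimage description of B
  have hdetT : LinearMap.det (Matrix.toLin' N) = (m:ℝ)+1 := by
    rw [LinearMap.det_toLin', hdetN]
  have hdetT' : LinearMap.det (Matrix.toLin' N) ≠ 0 := by
    rw [hdetT]; positivity
  have he : ∀ u : Fin (m+1) → ℝ,
      (MeasurableEquiv.piFinSuccAbove (fun _ : Fin (m+1) => ℝ) (Fin.last m)) u
        = (u (Fin.last m), fun j : Fin m => u j.castSucc) := by
    intro u
    simp [MeasurableEquiv.piFinSuccAbove_apply, Fin.removeNth, Fin.succAbove_last,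
      Fin.insertNthEquiv, Equiv.symm]
    rfl
  have hBeq : B = ⇑(Matrix.toLin' N) ⁻¹'
      (⇑(MeasurableEquiv.piFinSuccAbove (fun _ : Fin (m+1) => ℝ) (Fin.last m)) ⁻¹'
        (Set.Icc 0 t ×ˢ corner m s)) := by
    rw [hB]
    ext x
    simp only [Set.mem_setOf_eq, Set.mem_preimage, he, Set.mem_prod, Set.mem_Icc,
      hT_last, hT_cast, corner, Set.mem_setOf_eq]
    constructor
    · rintro ⟨hmono, hgap, hsum0, hsumt⟩
      refine ⟨⟨hsum0, hsumt⟩, fun k => ?_, ?_⟩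
      · have := hmono k.castSucc k.succ (le_of_lt (Fin.castSucc_lt_succ (i := k)))
        linarith
      · rw [telesum m x]
        linarith
    · rintro ⟨⟨hsum0, hsumt⟩, hpos, hsle⟩
      rw [telesum m x] at hsle
      refine ⟨?_, by linarith, hsum0, hsumt⟩
      intro i j hij
      have hanti : Antitone x := Fin.antitone_iff_succ_le.mpr (fun k => by linarith [hpos k])
      exact hanti hij
  rw [hBeq, Measure.addHaar_preimage_linearMap volume hdetT',
    (volume_preserving_piFinSuccAbove (fun _ : Fin (m+1) => ℝ) (Fin.last m)).measure_preimage_emb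
      (MeasurableEquiv.measurableEmbedding _),
    Measure.volume_eq_prod, Measure.prod_prod, Real.volume_Icc,
    volume_corner m s hs, hdetT, sub_zero]
  rw [← ENNReal.ofReal_mul ht, ← ENNReal.ofReal_mul (abs_nonneg _)]
  congr 1
  rw [abs_of_nonneg (by positivity), Nat.factorial_succ]
  push_cast
  field_simp


theorem schobi_prism_volume
    (n : ℕ) (hn : 2 ≤ n) (w : ℝ) (hw1 : -1 < w) (hw2 : w < 1 / ((n : ℝ) - 1))
    (b a : ℝ)
    (hb : b = (Real.sqrt (1 - w * ((n : ℝ) - 1)) - Real.sqrt (1 + w)) / n)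
    (ha : a = b + Real.sqrt (1 + w))
    (v : Fin n → Fin n → ℝ)
    (hv : ∀ i j, v i j = if i = j then a else b)
    (Q : Set (EuclideanSpace ℝ (Fin n)))
    (hQ : Q = convexHull ℝ (insert (0 : EuclideanSpace ℝ (Fin n))
      (Set.range (fun i : Fin n =>
        (WithLp.toLp 2 (fun j => ∑ k ∈ Finset.Iic i, v k j) : EuclideanSpace ℝ (Fin n))))))
    (Bslab : Set (EuclideanSpace ℝ (Fin n)))
    (hB : Bslab = {x : EuclideanSpace ℝ (Fin n) |
      (∀ i j : Fin n, i ≤ j → x j ≤ x i) ∧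
      x ⟨0, by omega⟩ - Real.sqrt (1 + w) ≤ x ⟨n - 1, by omega⟩ ∧
      0 ≤ ∑ i, x i ∧ (∑ i, x i) ≤ Real.sqrt (1 - w * ((n : ℝ) - 1))}) :
    MeasureTheory.volume Bslab =
      ENNReal.ofReal
        ((1 + w) ^ (((n : ℝ) - 1) / 2) * Real.sqrt (1 - w * ((n : ℝ) - 1)) /
          (n.factorial : ℝ)) ∧
    MeasureTheory.volume Bslab = MeasureTheory.volume Q := by
  have h1w : (0:ℝ) < 1 + w := by linarith
  obtain ⟨m, rfl⟩ : ∃ m, n = m + 1 := ⟨n - 1, by omega⟩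
  have hm : 1 ≤ m := by omega
  have hns : ((m+1:ℕ):ℝ) - 1 = (m:ℝ) := by push_cast; ring
  have hmpos : (0:ℝ) < (m:ℝ) := by exact_mod_cast hm
  have hw2' : w < 1 / (m:ℝ) := by rwa [hns] at hw2
  set s : ℝ := Real.sqrt (1 + w) with hsdef
  set t : ℝ := Real.sqrt (1 - w * (((m+1:ℕ):ℝ) - 1)) with htdef
  have hs : 0 < s := Real.sqrt_pos.mpr h1w
  have ht : 0 ≤ t := Real.sqrt_nonneg _
  have hm1 : ((m+1:ℕ):ℝ) ≠ 0 := by positivity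
  have hnb : ((m:ℝ)+1) * b = t - s := by
    rw [hb, show ((m:ℝ)+1) = ((m+1:ℕ):ℝ) by push_cast; ring, mul_comm,
      div_mul_cancel₀ _ hm1]
  have hBv : MeasureTheory.volume Bslab
      = ENNReal.ofReal (s ^ m * t / (m+1).factorial) := by
    rw [volume_transfer (m+1) Bslab]
    exact volume_B m s t hs.le ht _ (by rw [hB]; rfl)
  have hQv : MeasureTheory.volume Q
      = ENNReal.ofReal (s ^ m * t / (m+1).factorial) := by
    have hset : WithLp.toLp 2 ⁻¹' (convexHull ℝ (insert (0 : EuclideanSpace ℝ (Fin (m+1)))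
        (Set.range (fun i : Fin (m+1) =>
          (WithLp.toLp 2 (fun j => ∑ k ∈ Finset.Iic i, v k j) : EuclideanSpace ℝ (Fin (m+1)))))))
        = convexHull ℝ (insert (0 : Fin (m+1) → ℝ)
          (Set.range (fun i : Fin (m+1) =>
            (fun j => ∑ k ∈ Finset.Iic i, v k j : Fin (m+1) → ℝ)))) := by
      rw [← hull_transfer, Set.image_insert_eq, WithLp.toLp_zero, ← Set.range_comp]
      rfl
    rw [volume_transfer (m+1) Q, hQ, hset]
    exact volume_Q m a b s t hs ht ha hnb v hv
  have hexp : (1 + w) ^ ((((m+1:ℕ):ℝ) - 1) / 2) = s ^ m := by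
    rw [hns, show (m:ℝ)/2 = (1/2:ℝ) * (m:ℝ) by ring, Real.rpow_mul h1w.le,
      Real.rpow_natCast, ← Real.sqrt_eq_rpow, ← hsdef]
  constructor
  · rw [hBv, hexp]
  · rw [hBv, hQv]
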